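/- arXiv:1808.01559 — 2 statements merged into one kernel-verified Lean document; each statement's English description precedes it below -/
import Mathlib

section
/- For real σ > 1, the series ∑_{n=1}^∞ ∑_{m=1}^∞ m^{−σ+n+2} ∫_m^∞ (t − ⌊t⌋) t^{−n−3} dt converges (all terms are nonnegative). -/
open MeasureTheory Set Real

lemma aux_meas (n m : ℝ) (hm : 0 < m) :
    AEStronglyMeasurable (fun t : ℝ => Int.fract t * t ^ (-n - 3))
      (volume.restrict (Ioi m)) :=
  measurable_fract.aestronglyMeasurable.mul
    ((continuousOn_id.rpow_const fun _ hx => Or.inl (hm.trans hx).ne').aestronglyMeasurable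
      measurableSet_Ioi)

lemma aux_nonneg (n m : ℝ) (hm : 0 < m) :
    0 ≤ ∫ t in Ioi m, Int.fract t * t ^ (-n - 3) := by
  refine setIntegral_nonneg measurableSet_Ioi fun t ht => ?_
  exact mul_nonneg (Int.fract_nonneg t) (rpow_nonneg (le_of_lt (hm.trans ht)) _)

lemma aux_integrable (n m : ℝ) (hn : 0 ≤ n) (hm : 0 < m) :
    IntegrableOn (fun t : ℝ => Int.fract t * t ^ (-n - 3)) (Ioi m) := by
  have hlt : (-n - 3 : ℝ) < -1 := by linarith
  have hbase : IntegrableOn (fun t : ℝ => t ^ (-n - 3)) (Ioi m) :=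
    integrableOn_Ioi_rpow_of_lt hlt hm
  refine hbase.mono' (aux_meas n m hm) ?_
  filter_upwards [ae_restrict_mem measurableSet_Ioi] with t ht
  have ht0 : (0:ℝ) ≤ t := (hm.trans ht).le
  rw [Real.norm_eq_abs, abs_of_nonneg (mul_nonneg (Int.fract_nonneg t) (rpow_nonneg ht0 _))]
  calc Int.fract t * t ^ (-n - 3) ≤ 1 * t ^ (-n - 3) :=
        mul_le_mul_of_nonneg_right (Int.fract_lt_one t).le (rpow_nonneg ht0 _)
    _ = t ^ (-n - 3) := one_mul _

lemma aux_bound1 (n m : ℝ) (hn : 0 ≤ n) (hm : 0 < m) :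
    (∫ t in Ioi m, Int.fract t * t ^ (-n - 3)) ≤ m ^ (-n - 2) / (n + 2) := by
  have hlt : (-n - 3 : ℝ) < -1 := by linarith
  have h := setIntegral_mono_on (aux_integrable n m hn hm)
    (integrableOn_Ioi_rpow_of_lt hlt hm) measurableSet_Ioi (fun t ht => ?_)
  · refine h.trans_eq ?_
    rw [integral_Ioi_rpow_of_lt hlt hm, show (-n - 3 + 1 : ℝ) = -n - 2 by ring,
      div_eq_div_iff (by linarith : (-n - 2 : ℝ) ≠ 0) (by linarith : (n + 2 : ℝ) ≠ 0)]
    ring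
  · have ht0 : (0:ℝ) ≤ t := (hm.trans ht).le
    calc Int.fract t * t ^ (-n - 3) ≤ 1 * t ^ (-n - 3) :=
          mul_le_mul_of_nonneg_right (Int.fract_lt_one t).le (rpow_nonneg ht0 _)
      _ = t ^ (-n - 3) := one_mul _

lemma aux_bound2 (n : ℝ) (hn : 0 ≤ n) (M : ℕ) (hM : 1 ≤ M) :
    (∫ t in Ioi (M:ℝ), Int.fract t * t ^ (-n - 3)) ≤
      (M:ℝ) ^ (-n - 1) / ((n + 1) * (n + 2)) := by
  have hm : (0:ℝ) < M := by exact_mod_cast hM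
  have hlt3 : (-n - 3 : ℝ) < -1 := by linarith
  have hlt2 : (-n - 2 : ℝ) < -1 := by linarith
  have hint3 : IntegrableOn (fun t : ℝ => t ^ (-n - 3)) (Ioi (M:ℝ)) :=
    integrableOn_Ioi_rpow_of_lt hlt3 hm
  have hint2 : IntegrableOn (fun t : ℝ => t ^ (-n - 2)) (Ioi (M:ℝ)) :=
    integrableOn_Ioi_rpow_of_lt hlt2 hm
  have hintg : IntegrableOn (fun t : ℝ => t ^ (-n - 2) - (M:ℝ) * t ^ (-n - 3)) (Ioi (M:ℝ)) :=
    hint2.sub (hint3.const_mul (M:ℝ))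
  have h := setIntegral_mono_on (aux_integrable n (M:ℝ) hn hm) hintg
    measurableSet_Ioi (fun t ht => ?_)
  · refine h.trans_eq ?_
    rw [integral_sub hint2 (hint3.const_mul _), integral_const_mul,
      integral_Ioi_rpow_of_lt hlt2 hm, integral_Ioi_rpow_of_lt hlt3 hm,
      show (-n - 2 + 1 : ℝ) = -n - 1 by ring, show (-n - 3 + 1 : ℝ) = -n - 2 by ring]
    have hMM : (M:ℝ) * (M:ℝ) ^ (-n - 2) = (M:ℝ) ^ (-n - 1) := by
      rw [show (-n - 1 : ℝ) = 1 + (-n - 2) by ring, Real.rpow_add hm, Real.rpow_one]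
    rw [mul_div_assoc', mul_neg, hMM]
    have h1 : (-n - 1 : ℝ) ≠ 0 := by linarith
    have h2 : (-n - 2 : ℝ) ≠ 0 := by linarith
    have h3 : (n + 1 : ℝ) ≠ 0 := by linarith
    have h4 : (n + 2 : ℝ) ≠ 0 := by linarith
    field_simp
    ring
  · have htM : (M:ℝ) < t := ht
    have ht0 : (0:ℝ) < t := hm.trans htM
    have hfloor : (M:ℝ) ≤ (⌊t⌋ : ℝ) := by
      exact_mod_cast Int.le_floor.2 (by exact_mod_cast htM.le)
    have hfr : Int.fract t ≤ t - (M:ℝ) := by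
      rw [Int.fract]; linarith
    have hmul : Int.fract t * t ^ (-n - 3) ≤ (t - (M:ℝ)) * t ^ (-n - 3) :=
      mul_le_mul_of_nonneg_right hfr (rpow_nonneg ht0.le _)
    refine hmul.trans_eq ?_
    have htt : t * t ^ (-n - 3) = t ^ (-n - 2) := by
      rw [show (-n - 2 : ℝ) = 1 + (-n - 3) by ring, Real.rpow_add ht0, Real.rpow_one]
    rw [sub_mul, htt]

theorem stmt5 (σ : ℝ) (hσ : 1 < σ) :
    Summable (fun p : ℕ+ × ℕ+ =>
      ((p.2 : ℕ) : ℝ) ^ (-σ + (p.1 : ℕ) + 2) *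
        ∫ t in Set.Ioi (((p.2 : ℕ) : ℝ)), Int.fract t * t ^ (-((p.1 : ℕ) : ℝ) - 3)) := by
  set θ : ℝ := (max (2 - σ) 0 + 1) / 2 with hθdef
  have hθ0 : 0 < θ := by positivity
  have hθ1 : θ < 1 := by
    have : max (2 - σ) 0 < 1 := max_lt (by linarith) one_pos
    simp only [hθdef]; linarith
  have hθσ : 1 - θ - σ < -1 := by
    have h1 : 2 - σ ≤ max (2 - σ) 0 := le_max_left _ _
    simp only [hθdef]; linarith
  have hθ2 : θ - 2 < -1 := by linarith
  set F : ℕ+ → ℝ := fun n => (((n:ℕ):ℝ) + 1) ^ (θ - 1) * (((n:ℕ):ℝ) + 2) ^ (-1:ℝ) with hF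
  set G : ℕ+ → ℝ := fun m => (((m:ℕ):ℝ)) ^ (1 - θ - σ) with hG
  have hFpos : ∀ n, 0 < F n := fun n =>
    mul_pos (rpow_pos_of_pos (by positivity) _) (rpow_pos_of_pos (by positivity) _)
  have hGpos : ∀ m, 0 < G m := fun m =>
    rpow_pos_of_pos (by exact_mod_cast m.pos) _
  have hsumF : Summable F := by
    have hbig : Summable (fun n : ℕ+ => (((n:ℕ):ℝ)) ^ (θ - 2)) :=
      ((Real.summable_nat_rpow (p := θ - 2)).2 hθ2).comp_injective
        (fun a b h => PNat.coe_injective h)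
    refine Summable.of_nonneg_of_le (fun n => (hFpos n).le) (fun n => ?_) hbig
    have hn1 : (0:ℝ) < ((n:ℕ):ℝ) := by exact_mod_cast n.pos
    have h1 : (((n:ℕ):ℝ) + 1) ^ (θ - 1) ≤ (((n:ℕ):ℝ)) ^ (θ - 1) :=
      rpow_le_rpow_of_nonpos hn1 (by linarith) (by linarith)
    have h2 : (((n:ℕ):ℝ) + 2) ^ (-1:ℝ) ≤ (((n:ℕ):ℝ)) ^ (-1:ℝ) :=
      rpow_le_rpow_of_nonpos hn1 (by linarith) (by norm_num)
    calc F n ≤ (((n:ℕ):ℝ)) ^ (θ - 1) * (((n:ℕ):ℝ)) ^ (-1:ℝ) :=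
          mul_le_mul h1 h2 (rpow_nonneg (by positivity) _) (rpow_nonneg hn1.le _)
      _ = (((n:ℕ):ℝ)) ^ (θ - 2) := by
          rw [← Real.rpow_add hn1]; ring_nf
  have hsumG : Summable G :=
    ((Real.summable_nat_rpow (p := 1 - θ - σ)).2 hθσ).comp_injective
      (fun a b h => PNat.coe_injective h)
  refine Summable.of_nonneg_of_le (fun p => ?_) (fun p => ?_)
    (hsumF.mul_of_nonneg hsumG (fun n => (hFpos n).le) (fun m => (hGpos m).le))
  · have hm : (0:ℝ) < ((p.2:ℕ):ℝ) := by exact_mod_cast p.2.pos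
    exact mul_nonneg (rpow_nonneg hm.le _) (aux_nonneg _ _ hm)
  · obtain ⟨N, M⟩ := p
    simp only
    set n : ℝ := ((N:ℕ):ℝ) with hn
    set m : ℝ := ((M:ℕ):ℝ) with hmdef
    have hn1 : (1:ℝ) ≤ n := by
      have h : (1:ℕ) ≤ (N:ℕ) := N.2
      simp only [hn]; exact_mod_cast h
    have hm0 : (0:ℝ) < m := by
      simp only [hmdef]; exact_mod_cast M.2
    have hn2 : (0:ℝ) < n + 1 := by linarith
    have hn3 : (0:ℝ) < n + 2 := by linarith
    set I : ℝ := ∫ t in Ioi m, Int.fract t * t ^ (-n - 3) with hI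
    have hI0 : 0 ≤ I := aux_nonneg n m hm0
    set T : ℝ := m ^ (-σ + n + 2) * I with hT
    have hT0 : 0 ≤ T := mul_nonneg (rpow_nonneg hm0.le _) hI0
    have hmexp : (0:ℝ) < m ^ (-σ + n + 2) := rpow_pos_of_pos hm0 _
    set a : ℝ := m ^ (-σ) * (n + 2) ^ (-1:ℝ) with ha
    set b : ℝ := m ^ (1 - σ) * ((n + 1) ^ (-1:ℝ) * (n + 2) ^ (-1:ℝ)) with hb
    have ha0 : 0 < a := mul_pos (rpow_pos_of_pos hm0 _) (rpow_pos_of_pos hn3 _)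
    have hb0 : 0 < b := mul_pos (rpow_pos_of_pos hm0 _)
      (mul_pos (rpow_pos_of_pos hn2 _) (rpow_pos_of_pos hn3 _))
    have hTa : T ≤ a := by
      have hba := aux_bound1 n m (by linarith) hm0
      calc T ≤ m ^ (-σ + n + 2) * (m ^ (-n - 2) / (n + 2)) :=
            mul_le_mul_of_nonneg_left hba hmexp.le
        _ = a := by
            rw [ha, ← mul_div_assoc, ← Real.rpow_add hm0,
              show (-σ + n + 2 + (-n - 2) : ℝ) = -σ by ring,
              Real.rpow_neg_one, div_eq_mul_inv]
    have hTb : T ≤ b := by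
      have hbb := aux_bound2 n (by linarith) (M:ℕ) M.one_le
      rw [← hmdef] at hbb
      calc T ≤ m ^ (-σ + n + 2) * (m ^ (-n - 1) / ((n + 1) * (n + 2))) :=
            mul_le_mul_of_nonneg_left hbb hmexp.le
        _ = b := by
            rw [hb, ← mul_div_assoc, ← Real.rpow_add hm0,
              show (-σ + n + 2 + (-n - 1) : ℝ) = 1 - σ by ring,
              Real.rpow_neg_one, Real.rpow_neg_one, div_eq_mul_inv, mul_inv]
    have hint : T ≤ a ^ θ * b ^ (1 - θ) := by
      rcases eq_or_lt_of_le hT0 with h | h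
      · rw [← h]; positivity
      · calc T = T ^ θ * T ^ (1 - θ) := by
              rw [← Real.rpow_add h, show (θ + (1 - θ) : ℝ) = 1 by ring, Real.rpow_one]
          _ ≤ a ^ θ * b ^ (1 - θ) :=
              mul_le_mul (rpow_le_rpow hT0 hTa hθ0.le) (rpow_le_rpow hT0 hTb (by linarith))
                (rpow_nonneg hT0 _) (rpow_nonneg ha0.le _)
    refine hint.trans_eq ?_
    have e1 : a ^ θ = m ^ (-σ * θ) * (n + 2) ^ (-θ) := by
      rw [ha, Real.mul_rpow (rpow_nonneg hm0.le _) (rpow_nonneg hn3.le _),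
        ← Real.rpow_mul hm0.le, ← Real.rpow_mul hn3.le, neg_one_mul]
    have e2 : b ^ (1 - θ) = m ^ ((1 - σ) * (1 - θ)) *
        ((n + 1) ^ (-(1 - θ)) * (n + 2) ^ (-(1 - θ))) := by
      rw [hb, Real.mul_rpow (rpow_nonneg hm0.le _)
          (mul_nonneg (rpow_nonneg hn2.le _) (rpow_nonneg hn3.le _)),
        Real.mul_rpow (rpow_nonneg hn2.le _) (rpow_nonneg hn3.le _),
        ← Real.rpow_mul hm0.le, ← Real.rpow_mul hn2.le, ← Real.rpow_mul hn3.le, neg_one_mul]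
    have hFG : F N * G M = m ^ (1 - θ - σ) * ((n + 1) ^ (θ - 1) * (n + 2) ^ (-1:ℝ)) := by
      simp only [hF, hG]
      rw [← hn, ← hmdef]
      ring
    calc a ^ θ * b ^ (1 - θ)
        = (m ^ (-σ * θ) * m ^ ((1 - σ) * (1 - θ))) *
            ((n + 1) ^ (-(1 - θ)) * ((n + 2) ^ (-θ) * (n + 2) ^ (-(1 - θ)))) := by
          rw [e1, e2]; ring
      _ = m ^ (1 - θ - σ) * ((n + 1) ^ (θ - 1) * (n + 2) ^ (-1:ℝ)) := by
          rw [← Real.rpow_add hm0, ← Real.rpow_add hn3,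
            show (-σ * θ + (1 - σ) * (1 - θ) : ℝ) = 1 - θ - σ by ring,
            show (-(1 - θ) : ℝ) = θ - 1 by ring,
            show (-θ + (θ - 1) : ℝ) = -1 by ring]
      _ = F N * G M := hFG.symm
end

section
/- For positive integers D < m and d ≥ 0, the identity ∑_{t=D+1}^{m-1} (1/(t^{s−d−2} m (m−t))) S_d(m−t, m) − ∑_{t=D+1}^{m-1} (1/(m^{s−d−1}(m−t))) S_d(m−t, m) summed over all m > D equals F_{d+1}(D,s) for Re(s) large, where S_d(a,b) = ∑_{a ≤ x₁ ≤ ⋯ ≤ x_d ≤ b} 1/(x₁⋯x_d) and F_{d+1}(D,s) = ∑_{N>D} (1/N^{s−d−1}) S_{d+1}(N−D, N). -/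
open Complex

/-- `Schain d a b = ∑_{a ≤ x₁ ≤ ⋯ ≤ x_d ≤ b} 1/(x₁⋯x_d)` over positive integers. -/
noncomputable def Schain (d a b : ℕ) : ℂ :=
  ∑' x : {x : Fin d → ℕ // Monotone x ∧ ∀ i, a ≤ x i ∧ x i ≤ b},
    ∏ i, (1 : ℂ) / ((x.1 i : ℂ))

open Finset Filter

open Classical in
noncomputable def chains (d a b : ℕ) : Finset (Fin d → ℕ) :=
  (Fintype.piFinset fun _ : Fin d => Finset.Icc a b).filter fun x => Monotone x

lemma mem_chains {d a b : ℕ} {x : Fin d → ℕ} :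
    x ∈ chains d a b ↔ Monotone x ∧ ∀ i, a ≤ x i ∧ x i ≤ b := by
  simp [chains, Fintype.mem_piFinset, and_comm]

lemma Schain_eq (d a b : ℕ) :
    Schain d a b = ∑ x ∈ chains d a b, ∏ i, (1 : ℂ) / ((x i : ℂ)) := by
  rw [Schain, ← Finset.tsum_subtype (chains d a b) (fun x => ∏ i, (1:ℂ)/(x i : ℂ))]
  exact ((Equiv.subtypeEquivRight (fun x => (mem_chains (d := d) (a := a) (b := b) (x := x)).symm)).tsum_eq
    (fun x : {x // x ∈ chains d a b} => ∏ i, (1:ℂ)/((x.1 i : ℂ))))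

lemma monotone_cons {d a : ℕ} {y : Fin d → ℕ} (hy : Monotone y) (h : ∀ i, a ≤ y i) :
    Monotone (Fin.cons a y) := by
  intro i j hij
  rcases Fin.eq_zero_or_eq_succ i with rfl | ⟨i', rfl⟩
  · rcases Fin.eq_zero_or_eq_succ j with rfl | ⟨j', rfl⟩
    · exact le_refl _
    · simpa using h j'
  · rcases Fin.eq_zero_or_eq_succ j with rfl | ⟨j', rfl⟩
    · exact absurd hij (by simp [Fin.le_def])
    · simpa using hy (Fin.succ_le_succ_iff.mp hij)

lemma monotone_snoc {d b : ℕ} {y : Fin d → ℕ} (hy : Monotone y) (h : ∀ i, y i ≤ b) :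
    Monotone (Fin.snoc y b) := by
  intro i j hij
  rcases Fin.eq_castSucc_or_eq_last i with ⟨i', rfl⟩ | rfl
  · rcases Fin.eq_castSucc_or_eq_last j with ⟨j', rfl⟩ | rfl
    · simpa using hy (Fin.castSucc_le_castSucc_iff.mp hij)
    · simpa using h i'
  · have : j = Fin.last d := le_antisymm (Fin.le_last j) hij
    subst this; exact le_refl _

lemma schainA {d a b : ℕ} (hab : a ≤ b) :
    Schain (d+1) a b = 1/(a:ℂ) * Schain d a b + Schain (d+1) (a+1) b := by
  classical
  rw [Schain_eq, Schain_eq, Schain_eq,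
    ← Finset.sum_filter_add_sum_filter_not (chains (d+1) a b) (fun x => x 0 = a)]
  congr 1
  · rw [Finset.mul_sum]
    refine Finset.sum_bij' (fun x _ => Fin.tail x) (fun y _ => Fin.cons a y) ?_ ?_ ?_ ?_ ?_
    · intro x hx
      simp only [Finset.mem_filter, mem_chains] at hx
      obtain ⟨⟨hmono, hbd⟩, hx0⟩ := hx
      refine mem_chains.mpr ⟨fun i j hij => hmono (Fin.succ_le_succ_iff.mpr hij), fun i => ?_⟩
      exact ⟨(hbd i.succ).1, (hbd i.succ).2⟩
    · intro y hy
      rw [mem_chains] at hy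
      obtain ⟨hmono, hbd⟩ := hy
      refine Finset.mem_filter.mpr ⟨mem_chains.mpr ⟨monotone_cons hmono (fun i => (hbd i).1), ?_⟩, by simp⟩
      intro i
      rcases Fin.eq_zero_or_eq_succ i with rfl | ⟨i', rfl⟩
      · simpa using hab
      · simpa using hbd i'
    · intro x hx
      simp only [Finset.mem_filter] at hx
      have h := Fin.cons_self_tail x
      rwa [hx.2] at h
    · intro y _; simp
    · intro x hx
      simp only [Finset.mem_filter] at hx
      rw [Fin.prod_univ_succ, hx.2]
      rfl
  · congr 1
    ext x
    simp only [Finset.mem_filter, mem_chains]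
    constructor
    · rintro ⟨⟨hmono, hbd⟩, hx0⟩
      refine ⟨hmono, fun i => ⟨?_, (hbd i).2⟩⟩
      have h1 : x 0 ≤ x i := hmono (Fin.zero_le i)
      have h2 : a ≤ x 0 := (hbd 0).1
      omega
    · rintro ⟨hmono, hbd⟩
      exact ⟨⟨hmono, fun i => ⟨le_trans (by omega) (hbd i).1, (hbd i).2⟩⟩,
        by have := (hbd 0).1; omega⟩

lemma schainB {d a b : ℕ} (hab : a ≤ b + 1) :
    Schain (d+1) a (b+1) = Schain (d+1) a b + 1/((b:ℂ)+1) * Schain d a (b+1) := by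
  classical
  rw [Schain_eq, Schain_eq, Schain_eq,
    ← Finset.sum_filter_add_sum_filter_not (chains (d+1) a (b+1)) (fun x => x (Fin.last d) = b + 1)]
  rw [add_comm (∑ x ∈ Finset.filter _ _, _)]
  congr 1
  · congr 1
    ext x
    simp only [Finset.mem_filter, mem_chains]
    constructor
    · rintro ⟨⟨hmono, hbd⟩, hxl⟩
      refine ⟨hmono, fun i => ⟨(hbd i).1, ?_⟩⟩
      have h1 : x i ≤ x (Fin.last d) := hmono (Fin.le_last i)
      have h2 : x (Fin.last d) ≤ b + 1 := (hbd (Fin.last d)).2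
      omega
    · rintro ⟨hmono, hbd⟩
      exact ⟨⟨hmono, fun i => ⟨(hbd i).1, by have := (hbd i).2; omega⟩⟩,
        by have := (hbd (Fin.last d)).2; omega⟩
  · rw [Finset.mul_sum]
    refine Finset.sum_bij' (fun x _ => Fin.init x) (fun y _ => Fin.snoc y (b+1)) ?_ ?_ ?_ ?_ ?_
    · intro x hx
      simp only [Finset.mem_filter, mem_chains] at hx
      obtain ⟨⟨hmono, hbd⟩, hxl⟩ := hx
      refine mem_chains.mpr ⟨fun i j hij => hmono (Fin.castSucc_le_castSucc_iff.mpr hij),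
        fun i => ⟨(hbd i.castSucc).1, (hbd i.castSucc).2⟩⟩
    · intro y hy
      rw [mem_chains] at hy
      obtain ⟨hmono, hbd⟩ := hy
      refine Finset.mem_filter.mpr ⟨mem_chains.mpr ⟨monotone_snoc hmono (fun i => (hbd i).2), ?_⟩, by simp⟩
      intro i
      rcases Fin.eq_castSucc_or_eq_last i with ⟨i', rfl⟩ | rfl
      · simpa using hbd i'
      · simpa using hab
    · intro x hx
      simp only [Finset.mem_filter] at hx
      have h := Fin.snoc_init_self x
      rwa [hx.2] at h
    · intro y _; simp
    · intro x hx
      simp only [Finset.mem_filter] at hx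
      rw [Fin.prod_univ_castSucc, hx.2, mul_comm]
      push_cast
      rfl

lemma card_chains_le (d a b : ℕ) : (chains d a b).card ≤ (b + 1 - a)^d := by
  classical
  calc (chains d a b).card ≤ (Fintype.piFinset fun _ : Fin d => Finset.Icc a b).card :=
        Finset.card_filter_le _ _
    _ = (b + 1 - a)^d := by simp [Fintype.card_piFinset, Nat.card_Icc]

lemma term_norm_le {d a b : ℕ} (ha : 1 ≤ a) {x : Fin d → ℕ} (hx : x ∈ chains d a b) :
    ‖∏ i, (1 : ℂ) / ((x i : ℂ))‖ ≤ 1 := by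
  rw [norm_prod]
  apply Finset.prod_le_one
  · intro i _; positivity
  · intro i _
    rw [norm_div, norm_one, Complex.norm_natCast]
    have h := (mem_chains.mp hx).2 i
    have : (1:ℝ) ≤ (x i : ℝ) := by exact_mod_cast le_trans ha h.1
    rw [div_le_one (by linarith)]
    exact this

lemma schain_norm_le {d a b : ℕ} (ha : 1 ≤ a) :
    ‖Schain d a b‖ ≤ ((b + 1 - a : ℕ) : ℝ)^d := by
  rw [Schain_eq]
  calc ‖∑ x ∈ chains d a b, ∏ i, (1 : ℂ) / ((x i : ℂ))‖
      ≤ ∑ x ∈ chains d a b, ‖∏ i, (1 : ℂ) / ((x i : ℂ))‖ := norm_sum_le _ _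
    _ ≤ ∑ _x ∈ chains d a b, 1 := Finset.sum_le_sum fun x hx => term_norm_le ha hx
    _ = (chains d a b).card := by simp
    _ ≤ ((b + 1 - a : ℕ) : ℝ)^d := by
        rw [← Nat.cast_pow]
        exact_mod_cast card_chains_le d a b

lemma schain_norm_le' {e a b : ℕ} (ha : 1 ≤ a) :
    ‖Schain (e+1) a b‖ ≤ ((b + 1 - a : ℕ) : ℝ)^(e+1) / a := by
  rw [Schain_eq]
  have key : ∀ x ∈ chains (e+1) a b, ‖∏ i, (1 : ℂ) / ((x i : ℂ))‖ ≤ 1 / a := by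
    intro x hx
    rw [Fin.prod_univ_succ, norm_mul]
    have h1 : ‖(1:ℂ)/(x 0 : ℂ)‖ ≤ 1/(a:ℝ) := by
      rw [norm_div, norm_one, Complex.norm_natCast]
      have h := ((mem_chains.mp hx).2 0).1
      apply one_div_le_one_div_of_le
      · exact_mod_cast ha
      · exact_mod_cast h
    have h2 : ‖∏ i : Fin e, (1:ℂ)/(x i.succ : ℂ)‖ ≤ 1 := by
      have hx' : (fun i : Fin e => x i.succ) ∈ chains e a b := by
        rw [mem_chains] at hx ⊢
        exact ⟨fun i j hij => hx.1 (Fin.succ_le_succ_iff.mpr hij), fun i => hx.2 i.succ⟩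
      exact term_norm_le ha hx'
    calc ‖(1:ℂ)/(x 0:ℂ)‖ * ‖∏ i : Fin e, (1:ℂ)/(x i.succ : ℂ)‖ ≤ (1/(a:ℝ)) * 1 := by
          apply mul_le_mul h1 h2 (norm_nonneg _) (by positivity)
      _ = 1/(a:ℝ) := by ring
  calc ‖∑ x ∈ chains (e+1) a b, ∏ i, (1 : ℂ) / ((x i : ℂ))‖
      ≤ ∑ x ∈ chains (e+1) a b, ‖∏ i, (1 : ℂ) / ((x i : ℂ))‖ := norm_sum_le _ _
    _ ≤ ∑ _x ∈ chains (e+1) a b, 1/(a:ℝ) := Finset.sum_le_sum key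
    _ = (chains (e+1) a b).card * (1/(a:ℝ)) := by simp [Finset.sum_const, nsmul_eq_mul]
    _ ≤ ((b + 1 - a : ℕ):ℝ)^(e+1) * (1/(a:ℝ)) := by
        apply mul_le_mul_of_nonneg_right _ (by positivity)
        rw [← Nat.cast_pow]
        exact_mod_cast card_chains_le (e+1) a b
    _ = ((b + 1 - a : ℕ):ℝ)^(e+1) / a := by ring

lemma telescopeA (d N : ℕ) : ∀ j, 1 ≤ j → j ≤ N →
    ∑ a ∈ Finset.Ico 1 j, (1/(a:ℂ)) * Schain d a N
      = Schain (d+1) 1 N - Schain (d+1) j N := by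
  intro j
  induction j with
  | zero => omega
  | succ j ih =>
    intro _ hj
    rcases Nat.eq_or_lt_of_le (show 1 ≤ j + 1 from by omega) with h | h
    · simp [← h]
    · have hj1 : 1 ≤ j := by omega
      rw [Finset.sum_Ico_succ_top hj1, ih hj1 (by omega),
        schainA (show j ≤ N by omega)]
      ring

lemma L2 {d D N : ℕ} (hDN : D < N) :
    ∑ t ∈ Finset.Ioo D N, (1/(((N - t : ℕ) : ℕ) : ℂ)) * Schain d (N - t) N
      = Schain (d+1) 1 N - Schain (d+1) (N-D) N := by
  rw [← telescopeA d N (N - D) (by omega) (by omega)]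
  refine Finset.sum_bij' (fun t _ => N - t) (fun a _ => N - a) ?_ ?_ ?_ ?_ ?_
  · intro t ht; rw [Finset.mem_Ioo] at ht; rw [Finset.mem_Ico]; omega
  · intro a haa; rw [Finset.mem_Ico] at haa; rw [Finset.mem_Ioo]; omega
  · intro t ht; rw [Finset.mem_Ioo] at ht; omega
  · intro a haa; rw [Finset.mem_Ico] at haa; omega
  · intro t ht; rfl

lemma step1 (d t n : ℕ) (hn : 1 ≤ n) :
    (1/(n:ℂ) - 1/((n:ℂ)+t)) * Schain d n (n+t)
      = (Schain (d+1) n (n+t) - 1/((n:ℂ)+t) * Schain d n (n+t))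
        - (Schain (d+1) (n+1) (n+t+1) - 1/((n:ℂ)+t+1) * Schain d (n+1) (n+t+1)) := by
  rw [schainA (show n ≤ n+t by omega), schainB (show n+1 ≤ (n+t) + 1 by omega)]
  push_cast
  ring

noncomputable def Ffun (d t : ℕ) (n : ℕ) : ℂ :=
  Schain (d+1) (n+1) (n+1+t) - 1/((n:ℂ)+1+t) * Schain d (n+1) (n+1+t)

noncomputable def ffun (d t : ℕ) (k : ℕ) : ℂ :=
  (1/((k:ℂ)+1) - 1/((t:ℂ)+1+k)) * Schain d (k+1) (t+1+k)

lemma ffun_eq (d t k : ℕ) : ffun d t k = Ffun d t k - Ffun d t (k+1) := by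
  have h := step1 d t (k+1) (by omega)
  rw [ffun, Ffun, Ffun]
  rw [show t+1+k = (k+1)+t from by omega, show k+1+1+t = (k+1)+t+1 from by omega,
    show k+1+1 = (k+1)+1 from rfl]
  push_cast at h ⊢
  convert h using 2 <;> ring

lemma summable_invsq : Summable (fun k : ℕ => 1/((k:ℝ)+1)^2) := by
  have h := (summable_nat_add_iff 1).mpr ((Real.summable_one_div_nat_pow (p := 2)).mpr (by norm_num))
  refine h.congr fun k => ?_
  push_cast
  ring

lemma ffun_norm (d t k : ℕ) : ‖ffun d t k‖ ≤ (t * ((t+1:ℕ):ℝ)^d) * (1/((k:ℝ)+1)^2) := by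
  rw [ffun]
  have hk1 : ((k:ℂ)+1) ≠ 0 := Nat.cast_add_one_ne_zero k
  have hk2 : ((t:ℂ)+1+k) ≠ 0 := by
    rw [show ((t:ℂ)+1+k) = ((t+1+k:ℕ):ℂ) by push_cast; ring]
    exact Nat.cast_ne_zero.mpr (by omega)
  have hid : (1/((k:ℂ)+1) - 1/((t:ℂ)+1+k)) = (t:ℂ)/(((k:ℂ)+1)*((t:ℂ)+1+k)) := by
    field_simp
    ring
  rw [hid, norm_mul]
  have h1 : ‖(t:ℂ)/(((k:ℂ)+1)*((t:ℂ)+1+k))‖ ≤ (t:ℝ)/(((k:ℝ)+1)^2) := by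
    rw [norm_div, norm_mul]
    have e1 : ‖((k:ℂ)+1)‖ = (k:ℝ)+1 := by
      rw [show ((k:ℂ)+1) = ((k+1:ℕ):ℂ) by push_cast; ring, Complex.norm_natCast]; push_cast; ring
    have e2 : ‖((t:ℂ)+1+k)‖ = (t:ℝ)+1+k := by
      rw [show ((t:ℂ)+1+k) = ((t+1+k:ℕ):ℂ) by push_cast; ring, Complex.norm_natCast]; push_cast; ring
    rw [e1, e2, Complex.norm_natCast]
    apply div_le_div_of_nonneg_left (by positivity) (by positivity)
    have : ((k:ℝ)+1)*((k:ℝ)+1) ≤ ((k:ℝ)+1)*((t:ℝ)+1+k) := by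
      apply mul_le_mul_of_nonneg_left (by push_cast; linarith [Nat.cast_nonneg (α := ℝ) t]) (by positivity)
    calc ((k:ℝ)+1)^2 = ((k:ℝ)+1)*((k:ℝ)+1) := by ring
      _ ≤ _ := this
  have h2 : ‖Schain d (k+1) (t+1+k)‖ ≤ ((t+1:ℕ):ℝ)^d := by
    have := schain_norm_le (d := d) (a := k+1) (b := t+1+k) (by omega)
    rwa [show t+1+k+1-(k+1) = t+1 from by omega] at this
  calc ‖(t:ℂ)/(((k:ℂ)+1)*((t:ℂ)+1+k))‖ * ‖Schain d (k+1) (t+1+k)‖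
      ≤ ((t:ℝ)/(((k:ℝ)+1)^2)) * ((t+1:ℕ):ℝ)^d := by
        apply mul_le_mul h1 h2 (norm_nonneg _) (by positivity)
    _ = (t * ((t+1:ℕ):ℝ)^d) * (1/((k:ℝ)+1)^2) := by ring

lemma ffun_summable (d t : ℕ) : Summable (ffun d t) := by
  apply Summable.of_norm
  apply Summable.of_nonneg_of_le (fun k => norm_nonneg _) (fun k => ffun_norm d t k)
  exact (summable_invsq.mul_left _)

lemma Ffun_tendsto (d t : ℕ) : Tendsto (Ffun d t) atTop (nhds 0) := by
  refine squeeze_zero_norm (f := Ffun d t) (a := fun n => (((t+1:ℕ):ℝ)^(d+1) + ((t+1:ℕ):ℝ)^d) * (1/((n:ℝ)+1))) ?_ ?_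
  · intro n
    rw [Ffun]
    have h1 : ‖Schain (d+1) (n+1) (n+1+t)‖ ≤ ((t+1:ℕ):ℝ)^(d+1) / ((n:ℝ)+1) := by
      have := schain_norm_le' (e := d) (a := n+1) (b := n+1+t) (by omega)
      rwa [show n+1+t+1-(n+1) = t+1 from by omega, show ((n+1:ℕ):ℝ) = (n:ℝ)+1 from by push_cast; ring] at this
    have h2 : ‖1/((n:ℂ)+1+t) * Schain d (n+1) (n+1+t)‖ ≤ (1/((n:ℝ)+1)) * ((t+1:ℕ):ℝ)^d := by
      rw [norm_mul, norm_div, norm_one]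
      have e1 : ‖((n:ℂ)+1+t)‖ = (n:ℝ)+1+t := by
        rw [show ((n:ℂ)+1+t) = ((n+1+t:ℕ):ℂ) by push_cast; ring, Complex.norm_natCast]; push_cast; ring
      rw [e1]
      have h2a : ‖Schain d (n+1) (n+1+t)‖ ≤ ((t+1:ℕ):ℝ)^d := by
        have := schain_norm_le (d := d) (a := n+1) (b := n+1+t) (by omega)
        rwa [show n+1+t+1-(n+1) = t+1 from by omega] at this
      apply mul_le_mul _ h2a (norm_nonneg _) (by positivity)
      apply div_le_div_of_nonneg_left one_pos.le (by positivity)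
      linarith [Nat.cast_nonneg (α := ℝ) t]
    calc ‖Schain (d+1) (n+1) (n+1+t) - 1/((n:ℂ)+1+t) * Schain d (n+1) (n+1+t)‖
        ≤ ‖Schain (d+1) (n+1) (n+1+t)‖ + ‖1/((n:ℂ)+1+t) * Schain d (n+1) (n+1+t)‖ := norm_sub_le _ _
      _ ≤ ((t+1:ℕ):ℝ)^(d+1) / ((n:ℝ)+1) + (1/((n:ℝ)+1)) * ((t+1:ℕ):ℝ)^d := add_le_add h1 h2
      _ = (((t+1:ℕ):ℝ)^(d+1) + ((t+1:ℕ):ℝ)^d) * (1/((n:ℝ)+1)) := by ring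
  · have hden : Tendsto (fun n : ℕ => (n:ℝ)+1) atTop atTop :=
      Filter.tendsto_atTop_add_const_right _ 1 tendsto_natCast_atTop_atTop
    have := Tendsto.div_atTop (f := fun _ : ℕ => (((t+1:ℕ):ℝ)^(d+1) + ((t+1:ℕ):ℝ)^d)) tendsto_const_nhds hden
    simpa [div_eq_mul_inv, mul_comm] using this

lemma tsum_ffun (d t : ℕ) : ∑' k, ffun d t k = Schain (d+1) 1 t := by
  have hsum := ffun_summable d t
  have h1 : Tendsto (fun K => ∑ k ∈ Finset.range K, ffun d t k) atTop (nhds (∑' k, ffun d t k)) :=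
    hsum.hasSum.tendsto_sum_nat
  have h2 : Tendsto (fun K => ∑ k ∈ Finset.range K, ffun d t k) atTop (nhds (Ffun d t 0)) := by
    have heq : (fun K => ∑ k ∈ Finset.range K, ffun d t k) = fun K => Ffun d t 0 - Ffun d t K := by
      funext K
      rw [← Finset.sum_range_sub' (Ffun d t) K]
      exact Finset.sum_congr rfl fun k _ => ffun_eq d t k
    rw [heq]
    simpa using tendsto_const_nhds.sub (Ffun_tendsto d t)
  have h3 : ∑' k, ffun d t k = Ffun d t 0 := tendsto_nhds_unique h1 h2
  rw [h3, Ffun]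
  have hB := schainB (d := d) (a := 1) (b := t) (by omega)
  rw [show (0:ℕ)+1+t = t+1 from by omega, show (0:ℕ)+1 = 1 from rfl, hB]
  push_cast
  ring

noncomputable def wgt (s : ℂ) (d : ℕ) (n : ℕ) : ℂ := 1 / ((n:ℂ) ^ (s - (d:ℂ) - 1))

noncomputable def ginner (d : ℕ) (t m : ℕ) : ℂ :=
  (1/(((m - t : ℕ)):ℂ) - 1/((m:ℂ))) * Schain d (m - t) m

lemma ginner_shift (d t k : ℕ) : ginner d t (t+1+k) = ffun d t k := by
  rw [ginner, ffun, show t+1+k-t = k+1 from by omega]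
  push_cast
  ring

lemma norm_wgt {s : ℂ} {d : ℕ} {n : ℕ} (hn : 1 ≤ n) :
    ‖wgt s d n‖ = 1 / (n:ℝ) ^ (s.re - d - 1) := by
  have hpos : (0:ℝ) < (n:ℝ) := by exact_mod_cast hn
  rw [wgt, norm_div, norm_one, show ((n:ℂ)) = (((n:ℝ)):ℂ) from by norm_cast,
    Complex.norm_cpow_eq_rpow_re_of_pos hpos]
  simp [Complex.sub_re]

lemma wgt_schain_bound {s : ℂ} {d : ℕ} (hs : 2*(d:ℝ) + 6 < s.re) {a n : ℕ}
    (ha : 1 ≤ a) (hn : 1 ≤ n) :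
    ‖wgt s d n * Schain (d+1) a n‖ ≤ (n:ℝ) ^ (-2 : ℝ) := by
  have hpos : (0:ℝ) < (n:ℝ) := by exact_mod_cast hn
  have h1 : (1:ℝ) ≤ (n:ℝ) := by exact_mod_cast hn
  rw [norm_mul, norm_wgt hn]
  have hS : ‖Schain (d+1) a n‖ ≤ (n:ℝ)^(d+1) := by
    refine le_trans (schain_norm_le (by omega)) ?_
    apply pow_le_pow_left₀ (by positivity)
    exact_mod_cast Nat.sub_le_of_le_add (by omega)
  calc 1/(n:ℝ)^(s.re - d - 1) * ‖Schain (d+1) a n‖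
      ≤ 1/(n:ℝ)^(s.re - d - 1) * (n:ℝ)^(d+1) := by
        apply mul_le_mul_of_nonneg_left hS (by positivity)
    _ = (n:ℝ)^(((d+1:ℕ):ℝ)) / (n:ℝ)^(s.re - d - 1) := by
        rw [Real.rpow_natCast]; ring
    _ = (n:ℝ)^(((d+1:ℕ):ℝ) - (s.re - d - 1)) := by
        rw [← Real.rpow_sub hpos]
    _ ≤ (n:ℝ)^(-2:ℝ) := by
        apply Real.rpow_le_rpow_of_exponent_le h1
        push_cast
        linarith

lemma summable_rpow_neg2_subtype (D : ℕ) :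
    Summable (fun x : {x : ℕ // D < x} => ((x:ℕ):ℝ)^(-2:ℝ)) := by
  have h : Summable (fun n : ℕ => (n:ℝ)^(-2:ℝ)) := Real.summable_nat_rpow.mpr (by norm_num)
  exact h.subtype {x | D < x}

lemma summable_weighted {s : ℂ} {d D : ℕ} (hs : 2*(d:ℝ) + 6 < s.re) (a : ℕ → ℕ)
    (ha : ∀ n, D < n → 1 ≤ a n) :
    Summable (fun x : {x : ℕ // D < x} => wgt s d (x:ℕ) * Schain (d+1) (a (x:ℕ)) (x:ℕ)) := by
  apply Summable.of_norm
  apply Summable.of_nonneg_of_le (fun x => norm_nonneg _) (fun x => ?_) (summable_rpow_neg2_subtype D)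
  exact wgt_schain_bound hs (ha _ x.2) (by have := x.2; omega)

noncomputable def Ksum : ℝ := ∑' k : ℕ, 1/((k:ℝ)+1)^2

lemma Ksum_nonneg : 0 ≤ Ksum := tsum_nonneg fun k => by positivity

lemma ffun_norm_summable (d t : ℕ) : Summable (fun k => ‖ffun d t k‖) :=
  Summable.of_nonneg_of_le (fun _ => norm_nonneg _) (ffun_norm d t) (summable_invsq.mul_left _)

lemma tsum_ffun_norm_le (d t : ℕ) :
    ∑' k, ‖ffun d t k‖ ≤ (t * ((t+1:ℕ):ℝ)^d) * Ksum := by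
  rw [Ksum, ← tsum_mul_left]
  exact Summable.tsum_le_tsum (ffun_norm d t) (ffun_norm_summable d t) (summable_invsq.mul_left _)

noncomputable def cc (s : ℂ) (d D : ℕ) (t m : ℕ) : ℂ :=
  if D < t ∧ t < m then wgt s d t * ginner d t m else 0

lemma cc_fiber_eq {s : ℂ} {d D : ℕ} {t : ℕ} (hDt : D < t) (k : ℕ) :
    cc s d D t (k + (t+1)) = wgt s d t * ffun d t k := by
  rw [cc, if_pos ⟨hDt, by omega⟩, show k+(t+1) = t+1+k from by omega, ginner_shift]

lemma cc_zero_left {s : ℂ} {d D : ℕ} {t m : ℕ} (h : ¬ D < t) : cc s d D t m = 0 := by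
  rw [cc, if_neg (by tauto)]

lemma cc_zero_right {s : ℂ} {d D : ℕ} {t m : ℕ} (h : ¬ t < m) : cc s d D t m = 0 := by
  rw [cc, if_neg (by tauto)]

lemma summable_cc_fiber_norm (s : ℂ) (d D t : ℕ) :
    Summable (fun m => ‖cc s d D t m‖) := by
  by_cases hDt : D < t
  · rw [← summable_nat_add_iff (t+1)]
    refine Summable.congr (((ffun_norm_summable d t).mul_left ‖wgt s d t‖)) fun k => ?_
    rw [cc_fiber_eq hDt, norm_mul]
  · exact summable_zero.congr fun m => by rw [cc_zero_left hDt, norm_zero]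

noncomputable def ccBound (s : ℂ) (d : ℕ) (t : ℕ) : ℝ :=
  (1/(t:ℝ)^(s.re - d - 1)) * ((t * ((t+1:ℕ):ℝ)^d) * Ksum)

lemma ccBound_nonneg (s : ℂ) (d t : ℕ) : 0 ≤ ccBound s d t := by
  have := Ksum_nonneg
  rw [ccBound]
  positivity

lemma tsum_cc_fiber_norm_le (s : ℂ) (d D t : ℕ) :
    ∑' m, ‖cc s d D t m‖ ≤ ccBound s d t := by
  by_cases hDt : D < t
  · have hsum := summable_cc_fiber_norm s d D t
    rw [← Summable.sum_add_tsum_nat_add (t+1) hsum]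
    have hhead : ∑ i ∈ Finset.range (t+1), ‖cc s d D t i‖ = 0 := by
      apply Finset.sum_eq_zero
      intro i hi
      rw [Finset.mem_range] at hi
      rw [cc_zero_right (by omega), norm_zero]
    rw [hhead, zero_add]
    have htail : ∑' k, ‖cc s d D t (k + (t+1))‖ = ‖wgt s d t‖ * ∑' k, ‖ffun d t k‖ := by
      rw [← tsum_mul_left]
      exact tsum_congr fun k => by rw [cc_fiber_eq hDt, norm_mul]
    rw [htail, norm_wgt (by omega), ccBound]
    apply mul_le_mul_of_nonneg_left (tsum_ffun_norm_le d t) (by positivity)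
  · have hz : (∑' m, ‖cc s d D t m‖) = 0 := by
      simp only [cc_zero_left hDt, norm_zero]; exact tsum_zero
    rw [hz]; exact ccBound_nonneg s d t

lemma summable_ccBound {s : ℂ} {d : ℕ} (hs : 2*(d:ℝ) + 6 < s.re) :
    Summable (ccBound s d) := by
  refine Summable.of_nonneg_of_le (ccBound_nonneg s d) (fun t => ?_)
    ((Real.summable_nat_rpow.mpr (by norm_num : (-2:ℝ) < -1)).mul_left (Ksum * 2^d))
  · rcases Nat.eq_zero_or_pos t with rfl | ht
    · rw [ccBound]
      simp [Real.zero_rpow]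
    · have h1 : (1:ℝ) ≤ (t:ℝ) := by exact_mod_cast ht
      have hpos : (0:ℝ) < (t:ℝ) := by linarith
      rw [ccBound]
      have hstep : ((t+1:ℕ):ℝ)^d ≤ 2^d * (t:ℝ)^d := by
        rw [← mul_pow]
        apply pow_le_pow_left₀ (by positivity)
        push_cast; linarith
      calc (1/(t:ℝ)^(s.re - d - 1)) * ((t * ((t+1:ℕ):ℝ)^d) * Ksum)
          ≤ (1/(t:ℝ)^(s.re - d - 1)) * ((t * (2^d * (t:ℝ)^d)) * Ksum) := by
            apply mul_le_mul_of_nonneg_left _ (by positivity)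
            apply mul_le_mul_of_nonneg_right _ Ksum_nonneg
            apply mul_le_mul_of_nonneg_left hstep (by positivity)
        _ = (Ksum * 2^d) * ((t:ℝ)^(((d+1:ℕ):ℝ)) / (t:ℝ)^(s.re - d - 1)) := by
            rw [Real.rpow_natCast]; push_cast; ring
        _ = (Ksum * 2^d) * ((t:ℝ)^(((d+1:ℕ):ℝ) - (s.re - d - 1))) := by
            rw [← Real.rpow_sub hpos]
        _ ≤ (Ksum * 2^d) * ((t:ℝ)^(-2:ℝ)) := by
            apply mul_le_mul_of_nonneg_left _ (mul_nonneg Ksum_nonneg (by positivity))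
            apply Real.rpow_le_rpow_of_exponent_le h1
            push_cast; linarith

lemma summable_cc_norm {s : ℂ} {d D : ℕ} (hs : 2*(d:ℝ) + 6 < s.re) :
    Summable (fun p : ℕ × ℕ => ‖cc s d D p.1 p.2‖) := by
  rw [summable_prod_of_nonneg (fun p => norm_nonneg _)]
  exact ⟨fun t => summable_cc_fiber_norm s d D t,
    Summable.of_nonneg_of_le (fun t => tsum_nonneg fun m => norm_nonneg _)
      (fun t => tsum_cc_fiber_norm_le s d D t) (summable_ccBound hs)⟩

lemma summable_cc {s : ℂ} {d D : ℕ} (hs : 2*(d:ℝ) + 6 < s.re) :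
    Summable (Function.uncurry (cc s d D)) :=
  Summable.of_norm (summable_cc_norm hs)

lemma summable_cc_norm_swap {s : ℂ} {d D : ℕ} (hs : 2*(d:ℝ) + 6 < s.re) :
    Summable (fun p : ℕ × ℕ => ‖cc s d D p.2 p.1‖) :=
  (summable_cc_norm hs).prod_symm

lemma summable_Arow {s : ℂ} {d D : ℕ} (hs : 2*(d:ℝ) + 6 < s.re) :
    Summable (fun m : ℕ => ∑' t : ℕ, cc s d D t m) := by
  apply Summable.of_norm
  refine Summable.of_nonneg_of_le (fun m => norm_nonneg _) (fun m => ?_)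
    (((summable_prod_of_nonneg (fun p => norm_nonneg _)).mp (summable_cc_norm_swap (D := D) hs)).2)
  exact norm_tsum_le_tsum_norm ((summable_cc_norm_swap (D := D) hs).prod_factor m)

lemma swap_cc {s : ℂ} {d D : ℕ} (hs : 2*(d:ℝ) + 6 < s.re) :
    ∑' m : ℕ, ∑' t : ℕ, cc s d D t m = ∑' t : ℕ, ∑' m : ℕ, cc s d D t m :=
  Summable.tsum_comm (summable_cc hs)

lemma tsum_cc_row {s : ℂ} {d D : ℕ} (hs : 2*(d:ℝ) + 6 < s.re) (t : ℕ) (hDt : D < t) :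
    ∑' m : ℕ, cc s d D t m = wgt s d t * Schain (d+1) 1 t := by
  have hsum : Summable (fun m => cc s d D t m) := (summable_cc hs).prod_factor t
  rw [← Summable.sum_add_tsum_nat_add (t+1) hsum]
  have hhead : ∑ i ∈ Finset.range (t+1), cc s d D t i = 0 :=
    Finset.sum_eq_zero fun i hi => cc_zero_right (by rw [Finset.mem_range] at hi; omega)
  have htail : ∑' k, cc s d D t (k + (t+1)) = wgt s d t * Schain (d+1) 1 t := by
    calc ∑' k, cc s d D t (k + (t+1)) = ∑' k, wgt s d t * ffun d t k :=
          tsum_congr fun k => cc_fiber_eq hDt k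
      _ = wgt s d t * ∑' k, ffun d t k := tsum_mul_left
      _ = wgt s d t * Schain (d+1) 1 t := by rw [tsum_ffun]
  rw [hhead, zero_add, htail]

lemma tsum_cc_row_zero {s : ℂ} {d D : ℕ} (t : ℕ) (hDt : ¬ D < t) :
    ∑' m : ℕ, cc s d D t m = 0 := by
  simp only [cc_zero_left hDt]; exact tsum_zero

lemma tsum_A_side {s : ℂ} {d D : ℕ} (hs : 2*(d:ℝ) + 6 < s.re) :
    ∑' m : {m : ℕ // D < m}, (∑' t : ℕ, cc s d D t (m:ℕ))
      = ∑' t : {t : ℕ // D < t}, wgt s d (t:ℕ) * Schain (d+1) 1 (t:ℕ) := by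
  have hsupp1 : Function.support (fun m : ℕ => ∑' t : ℕ, cc s d D t m) ⊆ {m : ℕ | D < m} := by
    intro m hm
    by_contra hDm
    apply hm
    have : ∀ t, cc s d D t m = 0 := by
      intro t
      by_cases h : t < m
      · exact cc_zero_left (by simp only [Set.mem_setOf_eq] at hDm; omega)
      · exact cc_zero_right h
    simp only [this]; exact tsum_zero
  have hsupp2 : Function.support (fun t : ℕ => ∑' m : ℕ, cc s d D t m) ⊆ {t : ℕ | D < t} := by
    intro t ht
    by_contra hDt
    exact ht (tsum_cc_row_zero t hDt)
  calc ∑' m : {m : ℕ // D < m}, (∑' t : ℕ, cc s d D t (m:ℕ))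
      = ∑' m : ℕ, ∑' t : ℕ, cc s d D t m := tsum_subtype_eq_of_support_subset hsupp1
    _ = ∑' t : ℕ, ∑' m : ℕ, cc s d D t m := swap_cc hs
    _ = ∑' t : {t : ℕ // D < t}, (∑' m : ℕ, cc s d D t m) :=
        (tsum_subtype_eq_of_support_subset hsupp2).symm
    _ = ∑' t : {t : ℕ // D < t}, wgt s d (t:ℕ) * Schain (d+1) 1 (t:ℕ) :=
        tsum_congr fun t => tsum_cc_row hs (t:ℕ) t.2

lemma Aterm_rw {s : ℂ} {d : ℕ} {t m : ℕ} (ht : 0 < t) (htm : t < m) :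
    1 / ((t:ℂ)^(s - (d:ℂ) - 2) * (m:ℂ) * (((m-t:ℕ)):ℂ)) * Schain d (m-t) m
      = wgt s d t * ginner d t m := by
  have ht0 : ((t:ℂ)) ≠ 0 := Nat.cast_ne_zero.mpr (by omega)
  have hm0 : ((m:ℂ)) ≠ 0 := Nat.cast_ne_zero.mpr (by omega)
  have hmt0 : (((m-t:ℕ)):ℂ) ≠ 0 := Nat.cast_ne_zero.mpr (by omega)
  have hmt : (((m-t:ℕ)):ℂ) = (m:ℂ) - t := by
    rw [Nat.cast_sub htm.le]
  have hmt0' : (m:ℂ) - t ≠ 0 := hmt ▸ hmt0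
  have hcp : (t:ℂ)^(s - (d:ℂ) - 2) = (t:ℂ)^(s - d - 1) / t := by
    rw [show s - (d:ℂ) - 2 = (s - d - 1) - 1 by ring, Complex.cpow_sub _ _ ht0, Complex.cpow_one]
  have hw0 : (t:ℂ)^(s - (d:ℂ) - 1) ≠ 0 := by
    simp [Complex.cpow_eq_zero_iff, ht0]
  rw [wgt, ginner, hcp, hmt]
  field_simp
  ring_nf

lemma Bsum_rw {s : ℂ} {d D m : ℕ} (hDm : D < m) :
    ∑ t ∈ Finset.Ioo D m, 1 / ((m:ℂ)^(s - (d:ℂ) - 1) * (((m-t:ℕ)):ℂ)) * Schain d (m-t) m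
      = wgt s d m * (Schain (d+1) 1 m - Schain (d+1) (m-D) m) := by
  rw [← L2 hDm, Finset.mul_sum]
  apply Finset.sum_congr rfl
  intro t ht
  rw [wgt]
  rw [one_div, one_div, one_div, mul_inv]
  ring

theorem stmt10 (d D : ℕ) : ∃ R : ℝ, ∀ s : ℂ, R < s.re →
    ∑' m : {m : ℕ // D < m},
      ((∑ t ∈ Finset.Ioo D (m : ℕ),
          1 / ((t : ℂ) ^ (s - d - 2) * ((m : ℕ) : ℂ) * ((((m : ℕ) - t : ℕ)) : ℂ)) *
            Schain d ((m : ℕ) - t) m) -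
        ∑ t ∈ Finset.Ioo D (m : ℕ),
          1 / ((((m : ℕ) : ℂ)) ^ (s - d - 1) * ((((m : ℕ) - t : ℕ)) : ℂ)) *
            Schain d ((m : ℕ) - t) m) =
    ∑' N : {N : ℕ // D < N},
      1 / (((N : ℕ) : ℂ) ^ (s - d - 1)) * Schain (d + 1) ((N : ℕ) - D) N := by
  refine ⟨2*(d:ℝ) + 6, fun s hs => ?_⟩
  have hsum1 : Summable (fun x : {x:ℕ//D<x} => wgt s d (x:ℕ) * Schain (d+1) 1 (x:ℕ)) :=
    summable_weighted hs (fun _ => 1) (fun n _ => le_refl 1)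
  have hsum2 : Summable (fun x : {x:ℕ//D<x} => wgt s d (x:ℕ) * Schain (d+1) ((x:ℕ)-D) (x:ℕ)) :=
    summable_weighted hs (fun n => n - D) (fun n h => by show 1 ≤ n - D; omega)
  have hA : ∀ m : {m:ℕ//D < m},
      (∑ t ∈ Finset.Ioo D (m:ℕ),
        1 / ((t:ℂ)^(s - d - 2) * ((m:ℕ):ℂ) * ((((m:ℕ)-t:ℕ)):ℂ)) * Schain d ((m:ℕ)-t) (m:ℕ))
        = ∑' t : ℕ, cc s d D t (m:ℕ) := by
    intro m
    rw [tsum_eq_sum (s := Finset.Ioo D (m:ℕ))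
      (fun t ht => by rw [cc, if_neg (by rw [Finset.mem_Ioo] at ht; tauto)])]
    refine Finset.sum_congr rfl fun t ht => ?_
    rw [Finset.mem_Ioo] at ht
    rw [cc, if_pos ht]
    exact Aterm_rw (by omega) ht.2
  have hB : ∀ m : {m:ℕ//D < m},
      (∑ t ∈ Finset.Ioo D (m:ℕ),
        1 / (((m:ℕ):ℂ)^(s - d - 1) * ((((m:ℕ)-t:ℕ)):ℂ)) * Schain d ((m:ℕ)-t) (m:ℕ))
        = wgt s d (m:ℕ) * Schain (d+1) 1 (m:ℕ) - wgt s d (m:ℕ) * Schain (d+1) ((m:ℕ)-D) (m:ℕ) := by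
    intro m
    rw [Bsum_rw m.2, mul_sub]
  have hAsum : Summable (fun m : {m:ℕ//D < m} => ∑' t : ℕ, cc s d D t (m:ℕ)) :=
    (summable_Arow hs).subtype {m : ℕ | D < m}
  have hBsum : Summable (fun m : {m:ℕ//D < m} =>
      wgt s d (m:ℕ) * Schain (d+1) 1 (m:ℕ) - wgt s d (m:ℕ) * Schain (d+1) ((m:ℕ)-D) (m:ℕ)) :=
    hsum1.sub hsum2
  calc ∑' m : {m : ℕ // D < m}, (_ - _)
      = ∑' m : {m:ℕ//D < m}, ((∑' t : ℕ, cc s d D t (m:ℕ))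
          - (wgt s d (m:ℕ) * Schain (d+1) 1 (m:ℕ) - wgt s d (m:ℕ) * Schain (d+1) ((m:ℕ)-D) (m:ℕ))) :=
        tsum_congr fun m => by rw [hA m, hB m]
    _ = (∑' m : {m:ℕ//D < m}, ∑' t : ℕ, cc s d D t (m:ℕ))
          - ∑' m : {m:ℕ//D < m}, (wgt s d (m:ℕ) * Schain (d+1) 1 (m:ℕ) - wgt s d (m:ℕ) * Schain (d+1) ((m:ℕ)-D) (m:ℕ)) :=
        Summable.tsum_sub hAsum hBsum
    _ = (∑' t : {t:ℕ//D<t}, wgt s d (t:ℕ) * Schain (d+1) 1 (t:ℕ))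
          - ((∑' m : {m:ℕ//D < m}, wgt s d (m:ℕ) * Schain (d+1) 1 (m:ℕ))
            - ∑' m : {m:ℕ//D < m}, wgt s d (m:ℕ) * Schain (d+1) ((m:ℕ)-D) (m:ℕ)) := by
        rw [tsum_A_side hs, Summable.tsum_sub hsum1 hsum2]
    _ = ∑' N : {N:ℕ//D<N}, wgt s d (N:ℕ) * Schain (d+1) ((N:ℕ)-D) (N:ℕ) := by ring
    _ = ∑' N : {N : ℕ // D < N}, 1 / (((N:ℕ):ℂ) ^ (s - d - 1)) * Schain (d + 1) ((N:ℕ) - D) (N:ℕ) :=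
        tsum_congr fun N => by rw [wgt]
end
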